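/- Zero penalty along the segment (proof of Theorem 4.3): Assume ℓ_L < u_L and ℓ_R < u_R componentwise. Let x̄, x* ∈ Ω (in particular φ(x̄) = φ(x*) = 0) with 𝓛ˡ(x̄) = 𝓛ˡ(x*) and 𝓡ˡ(x̄) = 𝓡ˡ(x*), and set p = x* − x̄. Then φ(x̄ + αp) = 0 for every α ∈ [0,1], and consequently pᵀCp = 0, where C = LᵀR + RᵀL. -/
import Mathlib


open Matrix
open scoped Classical

noncomputable section

structure LCQPData (n nA nc : ℕ) where
  Q : Matrix (Fin n) (Fin n) ℝ
  g : Fin n → ℝ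
  A : Matrix (Fin nA) (Fin n) ℝ
  lA : Fin nA → ℝ
  uA : Fin nA → ℝ
  L : Matrix (Fin nc) (Fin n) ℝ
  R : Matrix (Fin nc) (Fin n) ℝ
  lL : Fin nc → ℝ
  uL : Fin nc → ℝ
  lR : Fin nc → ℝ
  uR : Fin nc → ℝ

variable {n nA nc m : ℕ}

/-- Lower-active set of the constraint `l ≤ M x ≤ u`. -/
def actL (M : Matrix (Fin m) (Fin n) ℝ) (l u : Fin m → ℝ) (x : Fin n → ℝ) : Set (Fin m) :=
  {i | l i = M.mulVec x i ∧ M.mulVec x i < u i}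

/-- Upper-active set of the constraint `l ≤ M x ≤ u`. -/
def actU (M : Matrix (Fin m) (Fin n) ℝ) (l u : Fin m → ℝ) (x : Fin n → ℝ) : Set (Fin m) :=
  {i | l i < M.mulVec x i ∧ M.mulVec x i = u i}

/-- Free (inactive) set of the constraint `l ≤ M x ≤ u`. -/
def actF (M : Matrix (Fin m) (Fin n) ℝ) (l u : Fin m → ℝ) (x : Fin n → ℝ) : Set (Fin m) :=
  {i | l i < M.mulVec x i ∧ M.mulVec x i < u i}

/-- The relaxed feasible set Ω̃. -/
def LCQPData.relFeas (P : LCQPData n nA nc) : Set (Fin n → ℝ) :=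
  {x | (∀ i, P.lA i ≤ P.A.mulVec x i ∧ P.A.mulVec x i ≤ P.uA i) ∧
       (∀ i, P.lL i ≤ P.L.mulVec x i ∧ P.L.mulVec x i ≤ P.uL i) ∧
       (∀ i, P.lR i ≤ P.R.mulVec x i ∧ P.R.mulVec x i ≤ P.uR i)}

/-- The penalty function φ. -/
def LCQPData.phi (P : LCQPData n nA nc) (x : Fin n → ℝ) : ℝ :=
  (P.L.mulVec x - P.lL) ⬝ᵥ (P.R.mulVec x - P.lR)

/-- The LCQP feasible set Ω. -/
def LCQPData.feas (P : LCQPData n nA nc) : Set (Fin n → ℝ) :=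
  {x ∈ P.relFeas | P.phi x = 0}

/-- ∇φ(x). -/
def LCQPData.gradPhi (P : LCQPData n nA nc) (x : Fin n → ℝ) : Fin n → ℝ :=
  P.Lᵀ.mulVec (P.R.mulVec x - P.lR) + P.Rᵀ.mulVec (P.L.mulVec x - P.lL)

/-- The quadratic objective f. -/
def LCQPData.obj (P : LCQPData n nA nc) (x : Fin n → ℝ) : ℝ :=
  (1/2) * (x ⬝ᵥ P.Q.mulVec x) + P.g ⬝ᵥ x

/-- The penalized objective ψ_ρ. -/
def LCQPData.psi (P : LCQPData n nA nc) (ρ : ℝ) (x : Fin n → ℝ) : ℝ :=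
  P.obj x + ρ * P.phi x

/-- ∇ψ_ρ(x). -/
def LCQPData.gradPsi (P : LCQPData n nA nc) (ρ : ℝ) (x : Fin n → ℝ) : Fin n → ℝ :=
  P.Q.mulVec x + P.g + ρ • P.gradPhi x

/-- The convexified inner-loop model ϑ_{x̄,ρ}. -/
def LCQPData.theta (P : LCQPData n nA nc) (ρ : ℝ) (xb x : Fin n → ℝ) : ℝ :=
  (1/2) * (x ⬝ᵥ P.Q.mulVec x) + (P.g + ρ • P.gradPhi xb) ⬝ᵥ x

/-- Strong stationarity of the LCQP. -/
def LCQPData.StrongStat (P : LCQPData n nA nc) (x : Fin n → ℝ)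
    (yA : Fin nA → ℝ) (yL yR : Fin nc → ℝ) : Prop :=
  x ∈ P.feas ∧
  P.Q.mulVec x + P.g = P.Aᵀ.mulVec yA + P.Lᵀ.mulVec yL + P.Rᵀ.mulVec yR ∧
  (∀ i ∈ actF P.A P.lA P.uA x, yA i = 0) ∧
  (∀ i ∈ actL P.A P.lA P.uA x, 0 ≤ yA i) ∧
  (∀ i ∈ actU P.A P.lA P.uA x, yA i ≤ 0) ∧
  (∀ i ∈ actF P.L P.lL P.uL x, yL i = 0) ∧
  (∀ i ∈ actL P.L P.lL P.uL x ∩ actL P.R P.lR P.uR x, 0 ≤ yL i) ∧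
  (∀ i ∈ actU P.L P.lL P.uL x, yL i ≤ 0) ∧
  (∀ i ∈ actF P.R P.lR P.uR x, yR i = 0) ∧
  (∀ i ∈ actL P.L P.lL P.uL x ∩ actL P.R P.lR P.uR x, 0 ≤ yR i) ∧
  (∀ i ∈ actU P.R P.lR P.uR x, yR i ≤ 0)

/-- KKT point of the penalized problem min_{x ∈ Ω̃} ψ_ρ(x). -/
def LCQPData.PenKKT (P : LCQPData n nA nc) (ρ : ℝ) (x : Fin n → ℝ)
    (yA : Fin nA → ℝ) (yL yR : Fin nc → ℝ) : Prop :=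
  x ∈ P.relFeas ∧
  P.Q.mulVec x + P.g + ρ • P.gradPhi x
    = P.Aᵀ.mulVec yA + P.Lᵀ.mulVec yL + P.Rᵀ.mulVec yR ∧
  (∀ i ∈ actF P.A P.lA P.uA x, yA i = 0) ∧
  (∀ i ∈ actL P.A P.lA P.uA x, 0 ≤ yA i) ∧
  (∀ i ∈ actU P.A P.lA P.uA x, yA i ≤ 0) ∧
  (∀ i ∈ actF P.L P.lL P.uL x, yL i = 0) ∧
  (∀ i ∈ actL P.L P.lL P.uL x, 0 ≤ yL i) ∧
  (∀ i ∈ actU P.L P.lL P.uL x, yL i ≤ 0) ∧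
  (∀ i ∈ actF P.R P.lR P.uR x, yR i = 0) ∧
  (∀ i ∈ actL P.R P.lR P.uR x, 0 ≤ yR i) ∧
  (∀ i ∈ actU P.R P.lR P.uR x, yR i ≤ 0)

/-- Zero penalty along the segment (proof of Theorem 4.3). -/
theorem zero_penalty_on_segment (n nA nc : ℕ) (P : LCQPData n nA nc)
    (hLbnd : ∀ i, P.lL i < P.uL i) (hRbnd : ∀ i, P.lR i < P.uR i)
    (xb xs : Fin n → ℝ) (hxb : xb ∈ P.feas) (hxs : xs ∈ P.feas)
    (hL : actL P.L P.lL P.uL xb = actL P.L P.lL P.uL xs)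
    (hR : actL P.R P.lR P.uR xb = actL P.R P.lR P.uR xs) :
    (∀ α ∈ Set.Icc (0:ℝ) 1, P.phi (xb + α • (xs - xb)) = 0) ∧
      (xs - xb) ⬝ᵥ (P.Lᵀ * P.R + P.Rᵀ * P.L).mulVec (xs - xb) = 0 := by
  obtain ⟨⟨-, hbL, hbR⟩, hbφ⟩ := hxb
  obtain ⟨⟨-, hsL, hsR⟩, hsφ⟩ := hxs
  have termzero : ∀ (x : Fin n → ℝ), (∀ i, P.lL i ≤ P.L.mulVec x i) →
      (∀ i, P.lR i ≤ P.R.mulVec x i) → P.phi x = 0 →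
      ∀ i, (P.L.mulVec x i - P.lL i) * (P.R.mulVec x i - P.lR i) = 0 := by
    intro x h1 h2 hφ i
    have hnn : ∀ j ∈ Finset.univ, 0 ≤ (P.L.mulVec x j - P.lL j) * (P.R.mulVec x j - P.lR j) :=
      fun j _ => mul_nonneg (by linarith [h1 j]) (by linarith [h2 j])
    have := (Finset.sum_eq_zero_iff_of_nonneg hnn).mp ?_ i (Finset.mem_univ i)
    · exact this
    · simpa [LCQPData.phi, dotProduct, Pi.sub_apply] using hφ
  have hb0 := termzero xb (fun i => (hbL i).1) (fun i => (hbR i).1) hbφ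
  have key : ∀ i, (P.L.mulVec xb i = P.lL i ∧ P.L.mulVec xs i = P.lL i) ∨
      (P.R.mulVec xb i = P.lR i ∧ P.R.mulVec xs i = P.lR i) := by
    intro i
    rcases mul_eq_zero.mp (hb0 i) with h | h
    · left
      have hb : P.L.mulVec xb i = P.lL i := by linarith
      have hmem : i ∈ actL P.L P.lL P.uL xb := ⟨hb.symm, hb ▸ hLbnd i⟩
      have hmem' : i ∈ actL P.L P.lL P.uL xs := hL ▸ hmem
      exact ⟨hb, hmem'.1.symm⟩
    · right
      have hb : P.R.mulVec xb i = P.lR i := by linarith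
      have hmem : i ∈ actL P.R P.lR P.uR xb := ⟨hb.symm, hb ▸ hRbnd i⟩
      have hmem' : i ∈ actL P.R P.lR P.uR xs := hR ▸ hmem
      exact ⟨hb, hmem'.1.symm⟩
  constructor
  · intro α hα
    have : ∀ i, (P.L.mulVec (xb + α • (xs - xb)) i - P.lL i) *
        (P.R.mulVec (xb + α • (xs - xb)) i - P.lR i) = 0 := by
      intro i
      have eL : P.L.mulVec (xb + α • (xs - xb)) i
          = P.L.mulVec xb i + α * (P.L.mulVec xs i - P.L.mulVec xb i) := by
        simp [Matrix.mulVec_add, Matrix.mulVec_smul, Matrix.mulVec_sub]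
      have eR : P.R.mulVec (xb + α • (xs - xb)) i
          = P.R.mulVec xb i + α * (P.R.mulVec xs i - P.R.mulVec xb i) := by
        simp [Matrix.mulVec_add, Matrix.mulVec_smul, Matrix.mulVec_sub]
      rcases key i with ⟨h1, h2⟩ | ⟨h1, h2⟩
      · rw [eL, h1, h2]; ring
      · rw [eR, h1, h2]; ring
    simp only [LCQPData.phi, dotProduct, Pi.sub_apply]
    exact Finset.sum_eq_zero fun i _ => this i
  · have hp : ∀ i, (P.L.mulVec (xs - xb) i) * (P.R.mulVec (xs - xb) i) = 0 := by
      intro i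
      rcases key i with ⟨h1, h2⟩ | ⟨h1, h2⟩
      · have : P.L.mulVec (xs - xb) i = 0 := by
          rw [Matrix.mulVec_sub]; simp [h1, h2]
        rw [this, zero_mul]
      · have : P.R.mulVec (xs - xb) i = 0 := by
          rw [Matrix.mulVec_sub]; simp [h1, h2]
        rw [this, mul_zero]
    have e : (P.Lᵀ * P.R + P.Rᵀ * P.L).mulVec (xs - xb)
        = P.Lᵀ.mulVec (P.R.mulVec (xs - xb)) + P.Rᵀ.mulVec (P.L.mulVec (xs - xb)) := by
      rw [Matrix.add_mulVec, Matrix.mulVec_mulVec, Matrix.mulVec_mulVec]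
    rw [e]
    simp only [dotProduct_add, dotProduct_mulVec, Matrix.vecMul_transpose]
    rw [← Matrix.dotProduct_mulVec, ← Matrix.dotProduct_mulVec]
    have : ∀ u v : Fin nc → ℝ, (∀ i, u i * v i = 0) → u ⬝ᵥ v = 0 := by
      intro u v h
      simp only [dotProduct]
      exact Finset.sum_eq_zero fun i _ => h i
    rw [this _ _ hp, this _ _ (fun i => by rw [mul_comm]; exact hp i), add_zero]
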